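/- Let n ≥ 1 be a natural number. For each m ∈ ℕ, set A_m = {x ∈ K_n : max_j x_j = n and x_j < n for every j ∉ {2m−1, 2m}}, u_m = n·e_{2m−1} + (n−1)·e_{2m}, and v_m = (n−1)·e_{2m−1} + n·e_{2m}. Then the sets A₁, A₂, … are pairwise disjoint, u_m, v_m ∈ A_m, d(u_m, v_m) = 1, and for every m: (i) d(x,y) + d(u_m,v_m) ≤ d(x,u_m) + d(y,v_m) for all x, y ∈ K_n ∖ A_m, and (ii) d(x,y) + d(z,w) + 2·d(u_m,v_m) ≤ d(x,u_m) + d(y,u_m) + d(z,v_m) + d(w,v_m) for all x, y, z, w ∈ K_n ∖ A_m. -/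

import Mathlib

/-- The metric space `Kn n`: all sequences with terms in `{0, 1, …, n}`, viewed as a metric
subspace of `ℓ∞` (bounded functions `ℕ → ℝ` with the supremum metric). -/
def Kn (n : ℕ) : Type :=
  {x : BoundedContinuousFunction ℕ ℝ // ∀ j : ℕ, ∃ k : ℕ, k ≤ n ∧ x j = k}

noncomputable instance (n : ℕ) : MetricSpace (Kn n) := Subtype.metricSpace

/-- The element of `Kn n` given by a sequence of naturals bounded by `n`. -/
noncomputable def Kn.mk (n : ℕ) (f : ℕ → ℕ) (hf : ∀ j, f j ≤ n) : Kn n :=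
  ⟨BoundedContinuousFunction.mkOfBound
      ⟨fun j => (f j : ℝ), continuous_of_discreteTopology⟩ n
      (fun x y => by
        have h1 : (0 : ℝ) ≤ f x := Nat.cast_nonneg _
        have h2 : (0 : ℝ) ≤ f y := Nat.cast_nonneg _
        have h3 : (f x : ℝ) ≤ n := Nat.cast_le.2 (hf x)
        have h4 : (f y : ℝ) ≤ n := Nat.cast_le.2 (hf y)
        simp only [ContinuousMap.coe_mk, Real.dist_eq, abs_sub_le_iff]
        constructor <;> linarith),
    fun j => ⟨f j, hf j, rfl⟩⟩

/-- `KnA n m = {x ∈ Kn n : max_j x_j = n and x_j < n for every j ∉ {2m-1, 2m}}`. -/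
def KnA (n m : ℕ) : Set (Kn n) :=
  {x | (⨆ j, x.1 j) = (n : ℝ) ∧ ∀ j : ℕ, j ≠ 2 * m - 1 → j ≠ 2 * m → x.1 j < (n : ℝ)}

/-- `u_m = n·e_{2m-1} + (n-1)·e_{2m}`. -/
noncomputable def Knu (n m : ℕ) : Kn n :=
  Kn.mk n (fun j => if j = 2 * m - 1 then n else if j = 2 * m then n - 1 else 0)
    (by intro j; split_ifs <;> omega)

/-- `v_m = (n-1)·e_{2m-1} + n·e_{2m}`. -/
noncomputable def Knv (n m : ℕ) : Kn n :=
  Kn.mk n (fun j => if j = 2 * m - 1 then n - 1 else if j = 2 * m then n else 0)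
    (by intro j; split_ifs <;> omega)

namespace KnAux

variable {n : ℕ}

noncomputable def nv (x : Kn n) (j : ℕ) : ℕ := (x.2 j).choose

lemma nv_le (x : Kn n) (j : ℕ) : nv x j ≤ n := (x.2 j).choose_spec.1

lemma coe_nv (x : Kn n) (j : ℕ) : x.1 j = (nv x j : ℝ) := (x.2 j).choose_spec.2

lemma dist_coord (x y : Kn n) (j : ℕ) : |x.1 j - y.1 j| ≤ dist x y := by
  change |x.1 j - y.1 j| ≤ dist x.1 y.1
  simpa [Real.dist_eq] using BoundedContinuousFunction.dist_coe_le_dist (f := x.1) (g := y.1) j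

lemma dist_le_iff (x y : Kn n) {C : ℝ} (hC : 0 ≤ C) :
    dist x y ≤ C ↔ ∀ j, |x.1 j - y.1 j| ≤ C := by
  change dist x.1 y.1 ≤ C ↔ _
  rw [BoundedContinuousFunction.dist_le hC]
  simp [Real.dist_eq]

lemma one_le_dist {x y : Kn n} (h : x ≠ y) : 1 ≤ dist x y := by
  obtain ⟨j, hj⟩ : ∃ j, x.1 j ≠ y.1 j := by
    by_contra hc
    push_neg at hc
    exact h (Subtype.ext (BoundedContinuousFunction.ext hc))
  refine le_trans ?_ (dist_coord x y j)
  rw [coe_nv x j, coe_nv y j] at hj ⊢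
  have hne : nv x j ≠ nv y j := fun h' => hj (by rw [h'])
  rcases lt_or_gt_of_ne hne with h' | h'
  · have : (nv x j : ℝ) + 1 ≤ (nv y j : ℝ) := by exact_mod_cast h'
    rw [abs_sub_comm, abs_of_nonneg (by linarith)]
    linarith
  · have : (nv y j : ℝ) + 1 ≤ (nv x j : ℝ) := by exact_mod_cast h'
    rw [abs_of_nonneg (by linarith)]
    linarith

lemma coord_le (x : Kn n) (j : ℕ) : x.1 j ≤ (n : ℝ) := by
  rw [coe_nv]; exact_mod_cast nv_le x j

lemma coord_nonneg (x : Kn n) (j : ℕ) : 0 ≤ x.1 j := by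
  rw [coe_nv]; exact Nat.cast_nonneg _

lemma bdd (x : Kn n) : BddAbove (Set.range fun j => x.1 j) :=
  ⟨n, by rintro _ ⟨j, rfl⟩; exact coord_le x j⟩

lemma le_sup (x : Kn n) (j : ℕ) : x.1 j ≤ ⨆ i, x.1 i := le_ciSup (bdd x) j

lemma sup_le (x : Kn n) : (⨆ i, x.1 i) ≤ (n : ℝ) := ciSup_le (coord_le x)

lemma sup_eq_of_coord (x : Kn n) (j : ℕ) (h : x.1 j = (n : ℝ)) : (⨆ i, x.1 i) = (n : ℝ) :=
  le_antisymm (sup_le x) (h ▸ le_sup x j)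

lemma u_coord (m j : ℕ) :
    (Knu n m).1 j = ((if j = 2*m-1 then n else if j = 2*m then n - 1 else 0 : ℕ) : ℝ) := rfl

lemma v_coord (m j : ℕ) :
    (Knv n m).1 j = ((if j = 2*m-1 then n - 1 else if j = 2*m then n else 0 : ℕ) : ℝ) := rfl

lemma cast_pred (hn : 1 ≤ n) : ((n - 1 : ℕ) : ℝ) = (n : ℝ) - 1 := by
  rw [Nat.cast_sub hn, Nat.cast_one]

lemma hab {m : ℕ} (hm : 1 ≤ m) : (2*m-1 : ℕ) ≠ 2*m := by omega

lemma u_mem (hn : 1 ≤ n) {m : ℕ} (hm : 1 ≤ m) : Knu n m ∈ KnA n m := by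
  constructor
  · refine sup_eq_of_coord _ (2*m-1) ?_
    rw [u_coord, if_pos rfl]
  · intro j h1 h2
    rw [u_coord, if_neg h1, if_neg h2]
    exact_mod_cast hn

lemma v_mem (hn : 1 ≤ n) {m : ℕ} (hm : 1 ≤ m) : Knv n m ∈ KnA n m := by
  constructor
  · refine sup_eq_of_coord _ (2*m) ?_
    rw [v_coord, if_neg (Ne.symm (hab hm)), if_pos rfl]
  · intro j h1 h2
    rw [v_coord, if_neg h1, if_neg h2]
    exact_mod_cast hn

lemma uv_ne (hn : 1 ≤ n) {m : ℕ} (hm : 1 ≤ m) : Knu n m ≠ Knv n m := by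
  intro h
  have h2 := congrArg (fun z : Kn n => z.1 (2*m-1)) h
  simp only [u_coord, v_coord, if_pos rfl] at h2
  have : n = n - 1 := Nat.cast_injective h2
  omega

lemma uv_props (hn : 1 ≤ n) {m : ℕ} (hm : 1 ≤ m) {p : Kn n}
    (hp : p = Knu n m ∨ p = Knv n m) :
    p ∈ KnA n m ∧ (∀ j, j ≠ 2*m-1 → j ≠ 2*m → p.1 j = 0) ∧
      (n : ℝ) - 1 ≤ p.1 (2*m-1) ∧ (n : ℝ) - 1 ≤ p.1 (2*m) := by
  rcases hp with rfl | rfl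
  · refine ⟨u_mem hn hm, ?_, ?_, ?_⟩
    · intro j h1 h2
      rw [u_coord, if_neg h1, if_neg h2, Nat.cast_zero]
    · rw [u_coord, if_pos rfl]
      have : (1:ℝ) ≤ n := by exact_mod_cast hn
      linarith
    · rw [u_coord, if_neg (Ne.symm (hab hm)), if_pos rfl, cast_pred hn]
  · refine ⟨v_mem hn hm, ?_, ?_, ?_⟩
    · intro j h1 h2
      rw [v_coord, if_neg h1, if_neg h2, Nat.cast_zero]
    · rw [v_coord, if_pos rfl, cast_pred hn]
    · rw [v_coord, if_neg (Ne.symm (hab hm)), if_pos rfl]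
      have : (1:ℝ) ≤ n := by exact_mod_cast hn
      linarith

lemma dist_uv (hn : 1 ≤ n) {m : ℕ} (hm : 1 ≤ m) : dist (Knu n m) (Knv n m) = 1 := by
  refine le_antisymm ?_ (one_le_dist (uv_ne hn hm))
  rw [dist_le_iff _ _ (by norm_num : (0:ℝ) ≤ 1)]
  intro j
  rw [u_coord, v_coord]
  by_cases h1 : j = 2*m-1
  · rw [if_pos h1, if_pos h1, cast_pred hn]
    norm_num
  · by_cases h2 : j = 2*m
    · rw [if_neg h1, if_pos h2, if_neg h1, if_pos h2, cast_pred hn]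
      norm_num
    · rw [if_neg h1, if_neg h2, if_neg h1, if_neg h2]
      norm_num

lemma not_mem {m : ℕ} {x : Kn n} (hx : x ∉ KnA n m) :
    (∃ j, j ≠ 2*m-1 ∧ j ≠ 2*m ∧ x.1 j = (n : ℝ)) ∨ (∀ j, nv x j < n) := by
  by_cases hs : (⨆ i, x.1 i) = (n : ℝ)
  · left
    have h : ¬ ∀ j : ℕ, j ≠ 2*m-1 → j ≠ 2*m → x.1 j < (n:ℝ) := fun h => hx ⟨hs, h⟩
    push_neg at h
    obtain ⟨j, h1, h2, h3⟩ := h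
    exact ⟨j, h1, h2, le_antisymm (coord_le x j) h3⟩
  · right
    intro j
    have h1 : x.1 j < n := lt_of_le_of_lt (le_sup x j) (lt_of_le_of_ne (sup_le x) hs)
    rw [coe_nv] at h1
    exact_mod_cast h1

lemma key (hn : 1 ≤ n) {m : ℕ} (hm : 1 ≤ m) {x y p q : Kn n}
    (hx : x ∉ KnA n m) (hy : y ∉ KnA n m)
    (hp : p = Knu n m ∨ p = Knv n m) (hq : q = Knu n m ∨ q = Knv n m) :
    dist x y + 1 ≤ dist x p + dist y q := by
  obtain ⟨hpA, hp0, hpa, hpb⟩ := uv_props hn hm hp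
  obtain ⟨hqA, hq0, hqa, hqb⟩ := uv_props hn hm hq
  have hxp : (1:ℝ) ≤ dist x p := one_le_dist (fun h => hx (h ▸ hpA))
  have hyq : (1:ℝ) ≤ dist y q := one_le_dist (fun h => hy (h ▸ hqA))
  have main : dist x y ≤ dist x p + dist y q - 1 := by
    rw [dist_le_iff x y (by linarith)]
    intro j
    have hxj := coord_le x j
    have hyj := coord_le y j
    have hxj0 := coord_nonneg x j
    have hyj0 := coord_nonneg y j
    have habs : |x.1 j - y.1 j| ≤ (n:ℝ) := abs_le.2 ⟨by linarith, by linarith⟩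
    rcases not_mem hx with ⟨j1, hj1a, hj1b, hj1⟩ | hxall
    · have h1 : (n:ℝ) ≤ dist x p := by
        have h2 := dist_coord x p j1
        rw [hj1, hp0 j1 hj1a hj1b, sub_zero, abs_of_nonneg (Nat.cast_nonneg n)] at h2
        exact h2
      linarith
    rcases not_mem hy with ⟨j1, hj1a, hj1b, hj1⟩ | hyall
    · have h1 : (n:ℝ) ≤ dist y q := by
        have h2 := dist_coord y q j1
        rw [hj1, hq0 j1 hj1a hj1b, sub_zero, abs_of_nonneg (Nat.cast_nonneg n)] at h2
        exact h2
      linarith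
    by_cases hjab : j = 2*m-1 ∨ j = 2*m
    · have hpj : (n:ℝ) - 1 ≤ p.1 j := by rcases hjab with h | h <;> rw [h] <;> assumption
      have hqj : (n:ℝ) - 1 ≤ q.1 j := by rcases hjab with h | h <;> rw [h] <;> assumption
      have hXle : x.1 j ≤ (n:ℝ) - 1 := by
        have h1 : (nv x j : ℝ) + 1 ≤ n := by exact_mod_cast hxall j
        rw [coe_nv]; linarith
      have hYle : y.1 j ≤ (n:ℝ) - 1 := by
        have h1 : (nv y j : ℝ) + 1 ≤ n := by exact_mod_cast hyall j
        rw [coe_nv]; linarith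
      have hdxp : p.1 j - x.1 j ≤ dist x p :=
        le_trans (by rw [abs_sub_comm]; exact le_abs_self _) (dist_coord x p j)
      have hdyq : q.1 j - y.1 j ≤ dist y q :=
        le_trans (by rw [abs_sub_comm]; exact le_abs_self _) (dist_coord y q j)
      by_cases hXe : x.1 j = (n:ℝ) - 1
      · rw [hXe, abs_of_nonneg (by linarith)]
        linarith
      · by_cases hYe : y.1 j = (n:ℝ) - 1
        · rw [hYe, abs_of_nonpos (by linarith)]
          linarith
        · have hX2 : x.1 j + 2 ≤ (n:ℝ) := by
            have hlt : x.1 j < (n:ℝ) - 1 := lt_of_le_of_ne hXle hXe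
            rw [coe_nv] at hlt ⊢
            have h1 : (nv x j : ℝ) + 1 < n := by linarith
            have h2 : nv x j + 1 < n := by exact_mod_cast h1
            have h3 : nv x j + 2 ≤ n := by omega
            exact_mod_cast h3
          have hY2 : y.1 j + 2 ≤ (n:ℝ) := by
            have hlt : y.1 j < (n:ℝ) - 1 := lt_of_le_of_ne hYle hYe
            rw [coe_nv] at hlt ⊢
            have h1 : (nv y j : ℝ) + 1 < n := by linarith
            have h2 : nv y j + 1 < n := by exact_mod_cast h1
            have h3 : nv y j + 2 ≤ n := by omega
            exact_mod_cast h3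
          rcases le_total (x.1 j) (y.1 j) with h | h
          · rw [abs_of_nonpos (by linarith)]; linarith
          · rw [abs_of_nonneg (by linarith)]; linarith
    · push_neg at hjab
      have hp0j := hp0 j hjab.1 hjab.2
      have hq0j := hq0 j hjab.1 hjab.2
      have hdxp : x.1 j ≤ dist x p := by
        have h1 := dist_coord x p j
        rwa [hp0j, sub_zero, abs_of_nonneg hxj0] at h1
      have hdyq : y.1 j ≤ dist y q := by
        have h1 := dist_coord y q j
        rwa [hq0j, sub_zero, abs_of_nonneg hyj0] at h1
      by_cases hX0 : x.1 j = 0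
      · rw [hX0, zero_sub, abs_neg, abs_of_nonneg hyj0]
        linarith
      · by_cases hY0 : y.1 j = 0
        · rw [hY0, sub_zero, abs_of_nonneg hxj0]
          linarith
        · have hX1 : (1:ℝ) ≤ x.1 j := by
            rw [coe_nv] at hX0 ⊢
            have h1 : nv x j ≠ 0 := by exact_mod_cast hX0
            exact_mod_cast Nat.one_le_iff_ne_zero.2 h1
          have hY1 : (1:ℝ) ≤ y.1 j := by
            rw [coe_nv] at hY0 ⊢
            have h1 : nv y j ≠ 0 := by exact_mod_cast hY0
            exact_mod_cast Nat.one_le_iff_ne_zero.2 h1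
          rcases le_total (x.1 j) (y.1 j) with h | h
          · rw [abs_of_nonpos (by linarith)]; linarith
          · rw [abs_of_nonneg (by linarith)]; linarith
  linarith

lemma disj (hn : 1 ≤ n) (m k : ℕ) (hm : 1 ≤ m) (hk : 1 ≤ k) (hmk : m ≠ k) :
    Disjoint (KnA n m) (KnA n k) := by
  rw [Set.disjoint_left]
  rintro x ⟨hs, hm'⟩ ⟨_, hk'⟩
  obtain ⟨j, hj⟩ : ∃ j, x.1 j = (n:ℝ) := by
    by_contra hc
    push_neg at hc
    have h2 : (⨆ i, x.1 i) ≤ (n:ℝ) - 1 := by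
      apply ciSup_le
      intro i
      have h3 : x.1 i < n := lt_of_le_of_ne (coord_le x i) (hc i)
      rw [coe_nv] at h3 ⊢
      have h4 : nv x i < n := by exact_mod_cast h3
      have h5 : (nv x i : ℝ) + 1 ≤ n := by exact_mod_cast h4
      linarith
    rw [hs] at h2
    have : (1:ℝ) ≤ n := by exact_mod_cast hn
    linarith
  have h1 : j = 2*m-1 ∨ j = 2*m := by
    by_contra hc
    push_neg at hc
    exact absurd hj (ne_of_lt (hm' j hc.1 hc.2))
  have h2 : j = 2*k-1 ∨ j = 2*k := by
    by_contra hc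
    push_neg at hc
    exact absurd hj (ne_of_lt (hk' j hc.1 hc.2))
  omega

end KnAux

/-- For every `n ≥ 1`: the sets `KnA n 1, KnA n 2, …` are pairwise disjoint, and for every
`m ≥ 1` one has `u_m, v_m ∈ A_m`, `d(u_m, v_m) = 1`, and the (ε-free) long trapezoid
inequalities hold for all points outside `A_m`. -/
theorem Kn_trapezoid (n : ℕ) (hn : 1 ≤ n) :
    (∀ m k : ℕ, 1 ≤ m → 1 ≤ k → m ≠ k → Disjoint (KnA n m) (KnA n k)) ∧
    ∀ m : ℕ, 1 ≤ m →
      Knu n m ∈ KnA n m ∧ Knv n m ∈ KnA n m ∧ Knu n m ≠ Knv n m ∧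
      dist (Knu n m) (Knv n m) = 1 ∧
      (∀ x ∉ KnA n m, ∀ y ∉ KnA n m,
        dist x y + dist (Knu n m) (Knv n m) ≤ dist x (Knu n m) + dist y (Knv n m)) ∧
      (∀ x ∉ KnA n m, ∀ y ∉ KnA n m, ∀ z ∉ KnA n m, ∀ w ∉ KnA n m,
        dist x y + dist z w + 2 * dist (Knu n m) (Knv n m) ≤
          dist x (Knu n m) + dist y (Knu n m) + dist z (Knv n m) + dist w (Knv n m)) := by
  refine ⟨KnAux.disj hn, fun m hm => ?_⟩
  have hduv := KnAux.dist_uv hn hm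
  refine ⟨KnAux.u_mem hn hm, KnAux.v_mem hn hm, KnAux.uv_ne hn hm, hduv, ?_, ?_⟩
  · intro x hx y hy
    have h := KnAux.key hn hm hx hy (Or.inl rfl) (Or.inr rfl)
    rw [hduv]
    linarith
  · intro x hx y hy z hz w hw
    have h1 := KnAux.key hn hm hx hy (Or.inl rfl) (Or.inl rfl)
    have h2 := KnAux.key hn hm hz hw (Or.inr rfl) (Or.inr rfl)
    rw [hduv]
    linarith
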